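/- Let w > 0, let f : [0, ∞) → ℝ be continuous, and let g : ℝ → ℝ be continuous and bounded, such that e^{−wt} f(t) − g(t) → 0 as t → ∞. Then e^{−2wT} ∫_0^T f(t)² dt − ∫_0^∞ e^{−2ws} g(T − s)² ds → 0 as T → ∞. -/

import Mathlib

set_option maxHeartbeats 800000

open MeasureTheory Filter

lemma aux_tail_exp (c : ℝ) (hc : 0 < c) (T : ℝ) :
    ∫ s in Set.Ioi T, Real.exp (-c * s) = Real.exp (-c * T) / c := by
  have hderiv : ∀ x ∈ Set.Ici T,
      HasDerivAt (fun x : ℝ => -Real.exp (-c * x) / c) (Real.exp (-c * x)) x := by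
    intro x _
    have : HasDerivAt (fun x : ℝ => -Real.exp (-c * x) / c)
        (-(Real.exp (-c * x) * (-c * 1)) / c) x :=
      (((hasDerivAt_id x).const_mul (-c)).exp).neg.div_const c
    convert this using 1
    field_simp
  have htend : Tendsto (fun x : ℝ => -Real.exp (-c * x) / c) atTop (nhds 0) := by
    have h1 : Tendsto (fun x : ℝ => Real.exp (-c * x)) atTop (nhds 0) :=
      Real.tendsto_exp_atBot.comp (tendsto_id.const_mul_atTop_of_neg (by linarith))
    simpa using (h1.neg.div_const c)
  have h := integral_Ioi_of_hasDerivAt_of_tendsto' hderiv (exp_neg_integrableOn_Ioi T hc) htend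
  rw [h]; ring

theorem exp_weighted_sq_integral_periodic (w : ℝ) (hw : 0 < w) (f g : ℝ → ℝ)
    (hf : ContinuousOn f (Set.Ici (0:ℝ)))
    (hg : Continuous g) (hgb : ∃ M : ℝ, ∀ t : ℝ, |g t| ≤ M)
    (hlim : Tendsto (fun t : ℝ => Real.exp (-w * t) * f t - g t) atTop (nhds 0)) :
    Tendsto (fun T : ℝ =>
        Real.exp (-2 * w * T) * (∫ t in (0:ℝ)..T, f t ^ 2)
          - ∫ s in Set.Ioi (0:ℝ), Real.exp (-2 * w * s) * g (T - s) ^ 2)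
      atTop (nhds 0) := by
  have h2w : (0:ℝ) < 2 * w := by linarith
  obtain ⟨M₀, hM₀⟩ := hgb
  set M : ℝ := max M₀ 0 with hMdef
  have hM : ∀ t, |g t| ≤ M := fun t => (hM₀ t).trans (le_max_left _ _)
  have hM0 : 0 ≤ M := le_max_right _ _
  set h : ℝ → ℝ := fun t => Real.exp (-w * t) * f t with hhdef
  have hhc : ContinuousOn h (Set.Ici 0) :=
    ((Real.continuous_exp.comp (continuous_const.mul continuous_id)).continuousOn).mul hf
  -- bound on h - g on [0, ∞)
  obtain ⟨A, hA⟩ := eventually_atTop.1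
    ((Metric.tendsto_nhds.1 hlim 1 one_pos).mono (fun t ht => by
      simp only [Real.dist_eq, sub_zero] at ht; exact ht.le))
  set A' : ℝ := max A 0 with hA'def
  obtain ⟨D₀, hD₀⟩ := (isCompact_Icc (a := (0:ℝ)) (b := A')).exists_bound_of_continuousOn
    ((hhc.sub hg.continuousOn).mono (fun x hx => hx.1))
  set D : ℝ := max D₀ 1 with hDdef
  have hD0 : (0:ℝ) ≤ D := le_trans zero_le_one (le_max_right _ _)
  have hD : ∀ t, 0 ≤ t → |h t - g t| ≤ D := by
    intro t ht
    rcases le_or_gt t A' with hcase | hcase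
    · exact le_trans (by simpa [Real.norm_eq_abs] using hD₀ t ⟨ht, hcase⟩) (le_max_left _ _)
    · have h1 := hA t (le_trans (le_max_left A 0) hcase.le)
      simp only [hhdef]
      exact le_trans h1 (le_max_right _ _)
  set C : ℝ := 2 * M + D with hCdef
  have hC0 : 0 ≤ C := by positivity
  have hsum : ∀ t, 0 ≤ t → |h t + g t| ≤ C := by
    intro t ht
    have := hD t ht
    have h1 := hM t
    have : |h t + g t| ≤ |h t - g t| + 2 * |g t| := by
      have := abs_add_le (h t - g t) (2 * g t)
      calc |h t + g t| = |(h t - g t) + 2 * g t| := by ring_nf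
        _ ≤ |h t - g t| + |2 * g t| := abs_add_le _ _
        _ = |h t - g t| + 2 * |g t| := by rw [abs_mul]; norm_num
    linarith [hD t ht, hM t, this]
  have hq : ∀ t, 0 ≤ t → |h t ^ 2 - g t ^ 2| ≤ |h t - g t| * C := by
    intro t ht
    have : h t ^ 2 - g t ^ 2 = (h t - g t) * (h t + g t) := by ring
    rw [this, abs_mul]
    exact mul_le_mul_of_nonneg_left (hsum t ht) (abs_nonneg _)
  -- integrability of the g-integrand
  have hIexp : ∀ a : ℝ, IntegrableOn (fun s : ℝ => Real.exp (-2 * w * s)) (Set.Ioi a) :=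
    fun a => by simpa using exp_neg_integrableOn_Ioi a h2w
  have hIg : ∀ T : ℝ, ∀ a : ℝ,
      IntegrableOn (fun s : ℝ => Real.exp (-2 * w * s) * g (T - s) ^ 2) (Set.Ioi a) := by
    intro T a
    refine Integrable.mono' ((hIexp a).const_mul (M ^ 2)) ?_ ?_
    · exact ((Real.continuous_exp.comp (continuous_const.mul continuous_id)).mul
        ((hg.comp (continuous_const.sub continuous_id)).pow 2)).aestronglyMeasurable
    · refine Filter.Eventually.of_forall (fun s => ?_)
      have h1 : |g (T - s)| ≤ M := hM _
      have h2 : g (T - s) ^ 2 ≤ M ^ 2 := by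
        have := sq_abs (g (T - s))
        nlinarith [abs_nonneg (g (T - s))]
      have h3 : (0:ℝ) < Real.exp (-2 * w * s) := Real.exp_pos _
      rw [Real.norm_eq_abs, abs_mul, abs_of_pos h3, abs_of_nonneg (sq_nonneg _)]
      calc Real.exp (-2 * w * s) * g (T - s) ^ 2
          ≤ Real.exp (-2 * w * s) * M ^ 2 := by nlinarith
        _ = M ^ 2 * Real.exp (-2 * w * s) := by ring
  -- step E1 : rewrite the first term
  have E1 : ∀ T : ℝ, Real.exp (-2 * w * T) * (∫ t in (0:ℝ)..T, f t ^ 2)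
      = ∫ s in (0:ℝ)..T, Real.exp (-2 * w * s) * h (T - s) ^ 2 := by
    intro T
    have h1 : (∫ t in (0:ℝ)..T, f t ^ 2) = ∫ s in (0:ℝ)..T, f (T - s) ^ 2 := by
      rw [intervalIntegral.integral_comp_sub_left (fun t => f t ^ 2) T]
      simp
    rw [h1, ← intervalIntegral.integral_const_mul]
    refine intervalIntegral.integral_congr (fun s _ => ?_)
    simp only [hhdef]
    rw [mul_pow, sq (Real.exp (-w * (T - s))), ← Real.exp_add, ← mul_assoc, ← Real.exp_add]
    ring_nf
  -- continuity of the difference integrand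
  have hmap : ∀ T : ℝ, Set.MapsTo (fun s : ℝ => T - s) (Set.Icc 0 T) (Set.Ici 0) := by
    intro T s hs
    simp only [Set.mem_Ici]
    linarith [hs.2]
  have hcont : ∀ T : ℝ, 0 ≤ T → ContinuousOn
      (fun s : ℝ => Real.exp (-2 * w * s) * (h (T - s) ^ 2 - g (T - s) ^ 2))
      (Set.Icc 0 T) := by
    intro T hT
    have hcomph : ContinuousOn (fun s : ℝ => h (T - s)) (Set.Icc 0 T) :=
      hhc.comp ((continuous_const.sub continuous_id).continuousOn) (hmap T)
    exact ((Real.continuous_exp.comp (continuous_const.mul continuous_id)).continuousOn).mul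
      ((hcomph.pow 2).sub (((hg.comp (continuous_const.sub continuous_id)).continuousOn).pow 2))
  have hconth : ∀ T : ℝ, 0 ≤ T → ContinuousOn
      (fun s : ℝ => Real.exp (-2 * w * s) * h (T - s) ^ 2) (Set.Icc 0 T) := by
    intro T hT
    have hcomph : ContinuousOn (fun s : ℝ => h (T - s)) (Set.Icc 0 T) :=
      hhc.comp ((continuous_const.sub continuous_id).continuousOn) (hmap T)
    exact ((Real.continuous_exp.comp (continuous_const.mul continuous_id)).continuousOn).mul
      (hcomph.pow 2)
  have hnegsimp : ∀ s : ℝ, -(2 * w) * s = -2 * w * s := fun s => by ring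
  have hItail : ∀ T : ℝ, (∫ s in Set.Ioi T, Real.exp (-2 * w * s))
      = Real.exp (-2 * w * T) / (2 * w) := by
    intro T
    have := aux_tail_exp (2 * w) h2w T
    simpa only [hnegsimp] using this
  -- main ε-argument
  rw [NormedAddCommGroup.tendsto_nhds_zero]
  intro ε hε
  set C' : ℝ := C + 1 with hC'def
  have hC' : 0 < C' := by positivity
  set ε' : ℝ := ε * w / (2 * C') with hε'def
  have hε' : 0 < ε' := by positivity
  obtain ⟨R, hR⟩ := eventually_atTop.1
    ((Metric.tendsto_nhds.1 hlim ε' hε').mono (fun t ht => by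
      simp only [Real.dist_eq, sub_zero] at ht; exact ht.le))
  set R' : ℝ := max R 0 with hR'def
  have hR'0 : 0 ≤ R' := le_max_right _ _
  have hR' : ∀ u : ℝ, R' ≤ u → |h u - g u| ≤ ε' := by
    intro u hu
    have h1 := hR u (le_trans (le_max_left R 0) hu)
    simp only [hhdef]
    exact h1
  -- the decaying bound
  have hβ : Tendsto (fun T : ℝ => D * C * R' * Real.exp (-2 * w * (T - R'))
      + M ^ 2 * (Real.exp (-2 * w * T) / (2 * w))) atTop (nhds 0) := by
    have e1 : Tendsto (fun T : ℝ => Real.exp (-2 * w * (T - R'))) atTop (nhds 0) := by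
      apply Real.tendsto_exp_atBot.comp
      have : Tendsto (fun T : ℝ => T - R') atTop atTop :=
        tendsto_atTop_add_const_right atTop (-R') tendsto_id
      exact this.const_mul_atTop_of_neg (by linarith)
    have e2 : Tendsto (fun T : ℝ => Real.exp (-2 * w * T)) atTop (nhds 0) :=
      Real.tendsto_exp_atBot.comp (tendsto_id.const_mul_atTop_of_neg (by linarith))
    have := ((e1.const_mul (D * C * R')).add ((e2.div_const (2 * w)).const_mul (M ^ 2)))
    simpa using this
  have hβsmall : ∀ᶠ T in atTop, D * C * R' * Real.exp (-2 * w * (T - R'))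
      + M ^ 2 * (Real.exp (-2 * w * T) / (2 * w)) < ε / 2 :=
    hβ.eventually_lt_const (by linarith)
  filter_upwards [eventually_ge_atTop R', hβsmall] with T hTR hTβ
  have hT0 : 0 ≤ T := le_trans hR'0 hTR
  have hTR0 : 0 ≤ T - R' := by linarith
  -- split the Ioi integral
  have hsplit : (∫ s in Set.Ioi (0:ℝ), Real.exp (-2 * w * s) * g (T - s) ^ 2)
      = (∫ s in (0:ℝ)..T, Real.exp (-2 * w * s) * g (T - s) ^ 2)
        + ∫ s in Set.Ioi T, Real.exp (-2 * w * s) * g (T - s) ^ 2 := by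
    rw [intervalIntegral.integral_of_le hT0, ← Set.Ioc_union_Ioi_eq_Ioi hT0,
      setIntegral_union (Set.Ioc_disjoint_Ioi le_rfl) measurableSet_Ioi
        ((hIg T 0).mono_set Set.Ioc_subset_Ioi_self) (hIg T T)]
  -- rewrite difference of interval integrals
  have iH : IntervalIntegrable (fun s : ℝ => Real.exp (-2 * w * s) * h (T - s) ^ 2)
      MeasureTheory.volume 0 T := by
    apply ContinuousOn.intervalIntegrable
    rw [Set.uIcc_of_le hT0]
    exact hconth T hT0
  have iG : IntervalIntegrable (fun s : ℝ => Real.exp (-2 * w * s) * g (T - s) ^ 2)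
      MeasureTheory.volume 0 T :=
    (((Real.continuous_exp.comp (continuous_const.mul continuous_id)).mul
      ((hg.comp (continuous_const.sub continuous_id)).pow 2))).intervalIntegrable 0 T
  have iF : ∀ a b : ℝ, 0 ≤ a → a ≤ b → b ≤ T → IntervalIntegrable
      (fun s : ℝ => Real.exp (-2 * w * s) * (h (T - s) ^ 2 - g (T - s) ^ 2))
      MeasureTheory.volume a b := by
    intro a b ha hab hb
    apply ContinuousOn.intervalIntegrable
    rw [Set.uIcc_of_le hab]
    exact (hcont T hT0).mono (Set.Icc_subset_Icc ha hb)
  have hdiff : (∫ s in (0:ℝ)..T, Real.exp (-2 * w * s) * h (T - s) ^ 2)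
      - (∫ s in (0:ℝ)..T, Real.exp (-2 * w * s) * g (T - s) ^ 2)
      = ∫ s in (0:ℝ)..T, Real.exp (-2 * w * s) * (h (T - s) ^ 2 - g (T - s) ^ 2) := by
    rw [← intervalIntegral.integral_sub iH iG]
    exact intervalIntegral.integral_congr (fun s _ => by ring)
  have hadj : (∫ s in (0:ℝ)..(T - R'), Real.exp (-2 * w * s) * (h (T - s) ^ 2 - g (T - s) ^ 2))
      + (∫ s in (T - R')..T, Real.exp (-2 * w * s) * (h (T - s) ^ 2 - g (T - s) ^ 2))
      = ∫ s in (0:ℝ)..T, Real.exp (-2 * w * s) * (h (T - s) ^ 2 - g (T - s) ^ 2) :=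
    intervalIntegral.integral_add_adjacent_intervals (iF 0 (T - R') le_rfl hTR0 (by linarith))
      (iF (T - R') T hTR0 (by linarith) le_rfl)
  -- bound 1 : the far piece
  have B1 : ‖∫ s in (0:ℝ)..(T - R'),
      Real.exp (-2 * w * s) * (h (T - s) ^ 2 - g (T - s) ^ 2)‖ ≤ ε / 4 := by
    have hb : ‖∫ s in (0:ℝ)..(T - R'),
        Real.exp (-2 * w * s) * (h (T - s) ^ 2 - g (T - s) ^ 2)‖
        ≤ |∫ s in (0:ℝ)..(T - R'), ε' * C * Real.exp (-2 * w * s)| := by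
      apply intervalIntegral.norm_integral_le_abs_of_norm_le
      · refine (ae_restrict_iff' measurableSet_uIoc).2
          (Filter.Eventually.of_forall (fun t ht => ?_))
        rw [Set.uIoc_of_le hTR0] at ht
        have htT : 0 ≤ T - t := by linarith [ht.2]
        have hTt : R' ≤ T - t := by linarith [ht.2]
        rw [Real.norm_eq_abs, abs_mul, abs_of_pos (Real.exp_pos _)]
        calc Real.exp (-2 * w * t) * |h (T - t) ^ 2 - g (T - t) ^ 2|
            ≤ Real.exp (-2 * w * t) * (|h (T - t) - g (T - t)| * C) :=
              mul_le_mul_of_nonneg_left (hq _ htT) (Real.exp_pos _).le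
          _ ≤ Real.exp (-2 * w * t) * (ε' * C) := by
              have := hR' (T - t) hTt
              have := mul_le_mul_of_nonneg_right (hR' (T - t) hTt) hC0
              nlinarith [Real.exp_pos (-2 * w * t)]
          _ = ε' * C * Real.exp (-2 * w * t) := by ring
      · exact (continuous_const.mul
          (Real.continuous_exp.comp (continuous_const.mul continuous_id))).intervalIntegrable _ _
    have hval : (∫ s in (0:ℝ)..(T - R'), ε' * C * Real.exp (-2 * w * s))
        = ε' * C * ∫ s in (0:ℝ)..(T - R'), Real.exp (-2 * w * s) :=
      intervalIntegral.integral_const_mul _ _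
    have hmono : (∫ s in (0:ℝ)..(T - R'), Real.exp (-2 * w * s)) ≤ 1 / (2 * w) := by
      rw [intervalIntegral.integral_of_le hTR0]
      have hsub := setIntegral_mono_set (s := Set.Ioc (0:ℝ) (T - R'))
        (t := Set.Ioi (0:ℝ)) (hIexp 0)
        (Filter.Eventually.of_forall (fun s => (Real.exp_pos _).le))
        (HasSubset.Subset.eventuallyLE Set.Ioc_subset_Ioi_self)
      have hval0 : (∫ s in Set.Ioi (0:ℝ), Real.exp (-2 * w * s)) = 1 / (2 * w) := by
        rw [hItail 0]
        norm_num
      calc (∫ s in Set.Ioc (0:ℝ) (T - R'), Real.exp (-2 * w * s))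
          ≤ ∫ s in Set.Ioi (0:ℝ), Real.exp (-2 * w * s) := hsub
        _ = 1 / (2 * w) := hval0
    have hnn : 0 ≤ ∫ s in (0:ℝ)..(T - R'), Real.exp (-2 * w * s) := by
      apply intervalIntegral.integral_nonneg hTR0
      exact fun x _ => (Real.exp_pos _).le
    have harith : ε' * C * (1 / (2 * w)) ≤ ε / 4 := by
      have hCC : C / C' ≤ 1 := by
        rw [div_le_one hC', hC'def]; linarith
      have hident : ε' * C * (1 / (2 * w)) = ε / 4 * (C / C') := by
        rw [hε'def]
        field_simp
        ring
      rw [hident]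
      nlinarith [hε.le, div_nonneg hC0 hC'.le]
    calc ‖∫ s in (0:ℝ)..(T - R'),
        Real.exp (-2 * w * s) * (h (T - s) ^ 2 - g (T - s) ^ 2)‖
        ≤ |∫ s in (0:ℝ)..(T - R'), ε' * C * Real.exp (-2 * w * s)| := hb
      _ = ε' * C * ∫ s in (0:ℝ)..(T - R'), Real.exp (-2 * w * s) := by
          rw [hval, abs_of_nonneg (by positivity)]
      _ ≤ ε' * C * (1 / (2 * w)) := by
          apply mul_le_mul_of_nonneg_left hmono (by positivity)
      _ ≤ ε / 4 := harith
  -- bound 2 : the near piece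
  have B2 : ‖∫ s in (T - R')..T,
      Real.exp (-2 * w * s) * (h (T - s) ^ 2 - g (T - s) ^ 2)‖
      ≤ D * C * R' * Real.exp (-2 * w * (T - R')) := by
    have hpt : ∀ x ∈ Set.uIoc (T - R') T,
        ‖Real.exp (-2 * w * x) * (h (T - x) ^ 2 - g (T - x) ^ 2)‖
          ≤ Real.exp (-2 * w * (T - R')) * (D * C) := by
      intro x hx
      rw [Set.uIoc_of_le (by linarith : T - R' ≤ T)] at hx
      have hx1 : 0 ≤ T - x := by linarith [hx.2]
      have hx2 : T - R' ≤ x := hx.1.le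
      have hexp : Real.exp (-2 * w * x) ≤ Real.exp (-2 * w * (T - R')) :=
        Real.exp_le_exp.2 (by nlinarith)
      have hqb : |h (T - x) ^ 2 - g (T - x) ^ 2| ≤ D * C := by
        calc |h (T - x) ^ 2 - g (T - x) ^ 2| ≤ |h (T - x) - g (T - x)| * C := hq _ hx1
          _ ≤ D * C := mul_le_mul_of_nonneg_right (hD _ hx1) hC0
      rw [Real.norm_eq_abs, abs_mul, abs_of_pos (Real.exp_pos _)]
      exact mul_le_mul hexp hqb (abs_nonneg _) (Real.exp_pos _).le
    have hb := intervalIntegral.norm_integral_le_of_norm_le_const hpt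
    calc ‖∫ s in (T - R')..T,
        Real.exp (-2 * w * s) * (h (T - s) ^ 2 - g (T - s) ^ 2)‖
        ≤ Real.exp (-2 * w * (T - R')) * (D * C) * |T - (T - R')| := hb
      _ = D * C * R' * Real.exp (-2 * w * (T - R')) := by
          rw [show T - (T - R') = R' by ring, abs_of_nonneg hR'0]; ring
  -- bound 3 : the tail
  have B3 : ‖∫ s in Set.Ioi T, Real.exp (-2 * w * s) * g (T - s) ^ 2‖
      ≤ M ^ 2 * (Real.exp (-2 * w * T) / (2 * w)) := by
    have h1 : ‖∫ s in Set.Ioi T, Real.exp (-2 * w * s) * g (T - s) ^ 2‖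
        ≤ ∫ s in Set.Ioi T, ‖Real.exp (-2 * w * s) * g (T - s) ^ 2‖ :=
      norm_integral_le_integral_norm (fun s : ℝ => Real.exp (-2 * w * s) * g (T - s) ^ 2)
    have h2 : (∫ s in Set.Ioi T, ‖Real.exp (-2 * w * s) * g (T - s) ^ 2‖)
        ≤ ∫ s in Set.Ioi T, M ^ 2 * Real.exp (-2 * w * s) := by
      apply integral_mono_of_nonneg
      · exact Filter.Eventually.of_forall (fun s => norm_nonneg _)
      · exact (hIexp T).const_mul _
      · refine Filter.Eventually.of_forall (fun s => ?_)
        show ‖Real.exp (-2 * w * s) * g (T - s) ^ 2‖ ≤ M ^ 2 * Real.exp (-2 * w * s)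
        have hgs : g (T - s) ^ 2 ≤ M ^ 2 := by
          have := hM (T - s)
          nlinarith [abs_nonneg (g (T - s)), sq_abs (g (T - s))]
        rw [Real.norm_eq_abs, abs_mul, abs_of_pos (Real.exp_pos _),
          abs_of_nonneg (sq_nonneg _)]
        nlinarith [Real.exp_pos (-2 * w * s)]
    have h3 : (∫ s in Set.Ioi T, M ^ 2 * Real.exp (-2 * w * s))
        = M ^ 2 * (Real.exp (-2 * w * T) / (2 * w)) := by
      rw [MeasureTheory.integral_const_mul, hItail T]
    linarith [h1, h2.trans_eq h3]
  -- assemble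
  rw [E1 T, hsplit]
  have hkey : (∫ s in (0:ℝ)..T, Real.exp (-2 * w * s) * h (T - s) ^ 2)
      - ((∫ s in (0:ℝ)..T, Real.exp (-2 * w * s) * g (T - s) ^ 2)
        + ∫ s in Set.Ioi T, Real.exp (-2 * w * s) * g (T - s) ^ 2)
      = (∫ s in (0:ℝ)..(T - R'), Real.exp (-2 * w * s) * (h (T - s) ^ 2 - g (T - s) ^ 2))
        + (∫ s in (T - R')..T, Real.exp (-2 * w * s) * (h (T - s) ^ 2 - g (T - s) ^ 2))
        - ∫ s in Set.Ioi T, Real.exp (-2 * w * s) * g (T - s) ^ 2 := by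
    rw [hadj, ← hdiff]; ring
  rw [hkey]
  calc ‖(∫ s in (0:ℝ)..(T - R'), Real.exp (-2 * w * s) * (h (T - s) ^ 2 - g (T - s) ^ 2))
        + (∫ s in (T - R')..T, Real.exp (-2 * w * s) * (h (T - s) ^ 2 - g (T - s) ^ 2))
        - ∫ s in Set.Ioi T, Real.exp (-2 * w * s) * g (T - s) ^ 2‖
      ≤ ‖∫ s in (0:ℝ)..(T - R'), Real.exp (-2 * w * s) * (h (T - s) ^ 2 - g (T - s) ^ 2)‖
        + ‖∫ s in (T - R')..T, Real.exp (-2 * w * s) * (h (T - s) ^ 2 - g (T - s) ^ 2)‖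
        + ‖∫ s in Set.Ioi T, Real.exp (-2 * w * s) * g (T - s) ^ 2‖ := by
        apply (norm_sub_le _ _).trans
        exact add_le_add (norm_add_le _ _) le_rfl
    _ ≤ ε / 4 + (D * C * R' * Real.exp (-2 * w * (T - R'))
        + M ^ 2 * (Real.exp (-2 * w * T) / (2 * w))) :=
        (add_le_add (add_le_add B1 B2) B3).trans (le_of_eq (by ring))
    _ < ε / 4 + ε / 2 := by linarith [hTβ]
    _ < ε := by linarith
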